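/- arXiv:2503.22523 — 5 statements merged into one kernel-verified Lean document; each statement's English description precedes it below -/
import Mathlib

section
/- Let A : ℝ^d → ℝ^m be linear, g ∈ ℝ^m, μ > 0, and 0 < τ ≤ 2/‖A‖². Define the SQRT-ISTA iteration f_{k+1} = S_{2τμσ_k}(f_k + τA*(g - Af_k)) with σ_k = ‖Af_k - g‖, assuming σ_k > 0 for all k. Then the cost Φ_μ(f) = ‖Af - g‖ + μ‖f‖₁ is nonincreasing along the iterates: Φ_μ(f_{k+1}) ≤ Φ_μ(f_k) for all k. -/
open scoped RealInnerProductSpace BigOperators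

noncomputable def softTh (t x : ℝ) : ℝ :=
  if x ≤ -(t/2) then x + t/2 else if |x| < t/2 then 0 else x - t/2

noncomputable def softThVec {d : ℕ} (t : ℝ) (x : EuclideanSpace ℝ (Fin d)) :
    EuclideanSpace ℝ (Fin d) := WithLp.toLp 2 (fun i => softTh t (x i))

noncomputable def l1 {d : ℕ} (f : EuclideanSpace ℝ (Fin d)) : ℝ := ∑ i, |f i|

lemma softTh_key (t x z : ℝ) (ht : 0 ≤ t) :
    (softTh t x - x)^2 + t * |softTh t x| + (softTh t x - z)^2
      ≤ (z - x)^2 + t * |z| := by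
  unfold softTh
  split_ifs with h1 h2
  · rw [abs_of_nonpos (by linarith)]
    rcases abs_cases z with ⟨h, h'⟩ | ⟨h, h'⟩ <;> nlinarith [mul_nonneg ht (abs_nonneg z)]
  · rw [abs_zero]
    rcases abs_cases z with ⟨h, h'⟩ | ⟨h, h'⟩ <;>
      rcases abs_cases x with ⟨hx1, hx2⟩ | ⟨hx1, hx2⟩ <;> nlinarith
  · push_neg at h1 h2
    have hx : t/2 ≤ x := by
      rcases abs_cases x with ⟨hx1, hx2⟩ | ⟨hx1, hx2⟩ <;> linarith
    rw [abs_of_nonneg (by linarith)]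
    rcases abs_cases z with ⟨h, h'⟩ | ⟨h, h'⟩ <;> nlinarith [mul_nonneg ht (abs_nonneg z)]

lemma norm_sq_eq' {n : ℕ} (v : EuclideanSpace ℝ (Fin n)) :
    ‖v‖ ^ 2 = ∑ i, (v i) ^ 2 := by
  rw [EuclideanSpace.norm_eq, Real.sq_sqrt (by positivity)]
  simp [sq_abs]

set_option maxHeartbeats 1000000 in
theorem sqrt_ista_cost_nonincreasing {d m : ℕ} (τ μ : ℝ) (hμ : 0 < μ)
    (A : EuclideanSpace ℝ (Fin d) →L[ℝ] EuclideanSpace ℝ (Fin m))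
    (g : EuclideanSpace ℝ (Fin m)) (hτ : 0 < τ) (hτ2 : τ ≤ 2 / ‖A‖ ^ 2)
    (f : ℕ → EuclideanSpace ℝ (Fin d)) (σ : ℕ → ℝ)
    (hσ : ∀ k, σ k = ‖A (f k) - g‖) (hσpos : ∀ k, 0 < σ k)
    (hiter : ∀ k, f (k + 1) =
      softThVec (2 * τ * μ * σ k) (f k + τ • (ContinuousLinearMap.adjoint A) (g - A (f k)))) :
    ∀ k, ‖A (f (k + 1)) - g‖ + μ * l1 (f (k + 1)) ≤ ‖A (f k) - g‖ + μ * l1 (f k) := by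
  intro k
  have hσk : 0 < σ k := hσpos k
  have hσnorm : σ k = ‖A (f k) - g‖ := hσ k
  set t := 2 * τ * μ * σ k with ht_def
  have ht0 : 0 < t := ht_def ▸ mul_pos (mul_pos (mul_pos two_pos hτ) hμ) hσk
  set u := g - A (f k) with hu
  set w := (ContinuousLinearMap.adjoint A) u with hw
  set x := f k + τ • w with hx
  have hf1 : f (k+1) = softThVec t x := hiter k
  have hsum : ∀ i : Fin d, (f (k+1) i - x i)^2 + t * |f (k+1) i| + (f (k+1) i - f k i)^2
      ≤ (f k i - x i)^2 + t * |f k i| := by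
    intro i
    have hi : f (k+1) i = softTh t (x i) := by rw [hf1]; rfl
    rw [hi]
    exact softTh_key t (x i) (f k i) ht0.le
  have S := Finset.sum_le_sum (fun i (_ : i ∈ Finset.univ) => hsum i)
  simp only [Finset.sum_add_distrib, ← Finset.mul_sum] at S
  have e1 : ‖f (k+1) - x‖^2 = ∑ i, (f (k+1) i - x i)^2 := by
    rw [norm_sq_eq']; rfl
  have e2 : ‖f k - x‖^2 = ∑ i, (f k i - x i)^2 := by
    rw [norm_sq_eq']; rfl
  have e3 : ‖f (k+1) - f k‖^2 = ∑ i, (f (k+1) i - f k i)^2 := by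
    rw [norm_sq_eq']; rfl
  have hA1 : ‖f (k+1) - x‖^2 + t * l1 (f (k+1)) + ‖f (k+1) - f k‖^2
      ≤ ‖f k - x‖^2 + t * l1 (f k) := by
    rw [e1, e2, e3]; simp only [l1]; linarith [S]
  -- expand norms
  have hfx2 : ‖f k - x‖^2 = τ^2 * ‖w‖^2 := by
    have hfx : f k - x = -(τ • w) := by rw [hx]; abel
    rw [hfx, norm_neg, norm_smul]
    simp [mul_pow, sq_abs, Real.norm_eq_abs]
  set Δ := f (k+1) - f k with hΔ
  have hexp : ‖f (k+1) - x‖^2 = ‖Δ‖^2 - 2*τ*⟪A Δ, u⟫ + τ^2*‖w‖^2 := by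
    have hf1x : f (k+1) - x = Δ - τ • w := by rw [hx, hΔ]; abel
    have hsm : ‖τ • w‖^2 = τ^2 * ‖w‖^2 := by
      rw [norm_smul]; simp [mul_pow, sq_abs, Real.norm_eq_abs]
    have hadj : ⟪Δ, w⟫ = ⟪A Δ, u⟫ := by
      rw [hw]; exact ContinuousLinearMap.adjoint_inner_right A Δ u
    rw [hf1x, norm_sub_sq_real, real_inner_smul_right, hadj, hsm]; ring
  have h2 : 2*‖Δ‖^2 - 2*τ*⟪A Δ, u⟫ + t * l1 (f (k+1)) ≤ t * l1 (f k) := by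
    rw [hexp, hfx2] at hA1; linarith
  have hAfp : A (f (k+1)) - g = (A (f k) - g) + A Δ := by
    rw [hΔ, map_sub]; abel
  have hs : ‖A (f (k+1)) - g‖^2 = σ k^2 + 2*⟪A (f k) - g, A Δ⟫ + ‖A Δ‖^2 := by
    rw [hAfp, norm_add_sq_real, hσnorm]
  have hiu : ⟪A Δ, u⟫ = - ⟪A (f k) - g, A Δ⟫ := by
    have h : u = -(A (f k) - g) := by rw [hu]; abel
    rw [h, inner_neg_right, real_inner_comm]
  have hopA : τ * ‖A Δ‖^2 ≤ 2 * ‖Δ‖^2 := by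
    have h1 : ‖A Δ‖ ≤ ‖A‖ * ‖Δ‖ := A.le_opNorm Δ
    have h3 : ‖A‖^2 * τ ≤ 2 := by
      rcases eq_or_lt_of_le (norm_nonneg A) with h | h
      · rw [← h]; nlinarith
      · have hA2 : (0:ℝ) < ‖A‖^2 := by positivity
        rw [le_div_iff₀ hA2] at hτ2; linarith
    have h4 : (0:ℝ) ≤ ‖A Δ‖ := norm_nonneg _
    have h5 : (0:ℝ) ≤ ‖Δ‖ := norm_nonneg _
    have h6 : (0:ℝ) ≤ ‖A‖ := norm_nonneg _
    generalize ‖A Δ‖ = a at h1 h4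
    generalize ‖Δ‖ = b at h1 h5 ⊢
    generalize ‖A‖ = c at h1 h3 h6
    nlinarith [mul_le_mul h1 h1 h4 (mul_nonneg h6 h5), sq_nonneg b, hτ.le]
  have key : τ * ‖A (f (k+1)) - g‖^2
      ≤ τ * (σ k^2 + 2*μ*(σ k)*(l1 (f k) - l1 (f (k+1)))) := by
    rw [hiu, ht_def] at h2
    rw [hs]
    have h4 : (0:ℝ) ≤ ‖A Δ‖ := norm_nonneg _
    generalize hibp : ⟪A (f k) - g, A Δ⟫ = ip at h2 ⊢
    generalize l1 (f k) = P at h2 ⊢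
    generalize l1 (f (k+1)) = Q at h2 ⊢
    generalize ‖A Δ‖ = a at hopA h4 ⊢
    generalize hb : ‖Δ‖ = b at hopA h2
    nlinarith [hopA, h2, sq_nonneg b]
  have hfinal : ‖A (f (k+1)) - g‖^2 ≤ σ k^2 + 2*μ*(σ k)*(l1 (f k) - l1 (f (k+1))) :=
    le_of_mul_le_mul_left (by linarith [key]) hτ
  have hD : 0 ≤ σ k + 2*μ*(l1 (f k) - l1 (f (k+1))) := by
    nlinarith [sq_nonneg ‖A (f (k+1)) - g‖, hfinal, hσk]
  have hnn : 0 ≤ σ k + μ*(l1 (f k) - l1 (f (k+1))) := by linarith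
  have hfin2 : ‖A (f (k+1)) - g‖ ≤ σ k + μ * (l1 (f k) - l1 (f (k+1))) := by
    nlinarith [norm_nonneg (A (f (k+1)) - g), hfinal, hnn,
      sq_nonneg (μ*(l1 (f k) - l1 (f (k+1))))]
  rw [← hσnorm]; linarith [hfin2]
end

section
/- (Asymptotic regularity) Let {f_k} be generated by SQRT-ISTA with 0 < τ < 2/‖A‖², σ_k > 0 for all k, and suppose σ_k ≤ σ_max for all k. Then Σ_{k=0}^∞ ‖f_{k+1} - f_k‖² < ∞; in particular ‖f_{k+1} - f_k‖ → 0 and |σ_{k+1} - σ_k| → 0 as k → ∞. -/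
open scoped RealInnerProductSpace BigOperators
open Filter Topology

lemma softTh_prox (t x z : ℝ) (ht : 0 ≤ t) :
    (softTh t x - x)^2/2 + (t/2)*|softTh t x| + (z - softTh t x)^2/2 ≤
      (z - x)^2/2 + (t/2)*|z| := by
  unfold softTh
  split_ifs with h1 h2
  · rw [abs_of_nonpos (by linarith)]
    rcases abs_cases z with ⟨hz, _⟩ | ⟨hz, _⟩ <;> nlinarith
  · rcases abs_cases x with ⟨hx, _⟩ | ⟨hx, _⟩ <;>
      rcases abs_cases z with ⟨hz, _⟩ | ⟨hz, _⟩ <;> simp <;> nlinarith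
  · have hx : t/2 ≤ x := by
      rcases abs_cases x with ⟨hx', _⟩ | ⟨hx', _⟩ <;> push_neg at h1 h2 <;> linarith
    rw [abs_of_nonneg (by linarith)]
    rcases abs_cases z with ⟨hz, _⟩ | ⟨hz, _⟩ <;> nlinarith

lemma norm_sq_eq_sum {d : ℕ} (v : EuclideanSpace ℝ (Fin d)) : ‖v‖^2 = ∑ i, (v i)^2 := by
  rw [EuclideanSpace.norm_eq, Real.sq_sqrt (by positivity)]
  simp [sq_abs]

lemma softThVec_prox {d : ℕ} (t : ℝ) (ht : 0 ≤ t) (x z : EuclideanSpace ℝ (Fin d)) :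
    ‖softThVec t x - x‖^2/2 + (t/2) * l1 (softThVec t x) + ‖z - softThVec t x‖^2/2 ≤
      ‖z - x‖^2/2 + (t/2) * l1 z := by
  simp only [norm_sq_eq_sum, l1, Finset.mul_sum, Finset.sum_div, ← Finset.sum_add_distrib]
  apply Finset.sum_le_sum
  intro i _
  have := softTh_prox t (x i) (z i) ht
  simpa [softThVec] using this

set_option maxHeartbeats 1000000 in
/-- Polynomial-form one-step descent for SQRT-ISTA. -/
lemma descent_step {d m : ℕ} {τ μ : ℝ} (hμ : 0 < μ)
    (A : EuclideanSpace ℝ (Fin d) →L[ℝ] EuclideanSpace ℝ (Fin m))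
    (g : EuclideanSpace ℝ (Fin m)) (q : EuclideanSpace ℝ (Fin d)) (hτ : 0 < τ)
    {s : ℝ} (hs : s = ‖A q - g‖) (hspos : 0 < s) (p : EuclideanSpace ℝ (Fin d))
    (hp : p = softThVec (2 * τ * μ * s) (q + τ • (ContinuousLinearMap.adjoint A) (g - A q))) :
    2*s*τ*(‖A p - g‖ + μ * l1 p) + (2 - τ*‖A‖^2) * ‖p - q‖^2 ≤
      2*s*τ*(s + μ * l1 q) := by
  set w := (ContinuousLinearMap.adjoint A) (g - A q) with hw
  have ht : (0:ℝ) ≤ 2 * τ * μ * s := by positivity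
  have hprox := softThVec_prox (2*τ*μ*s) ht (q + τ • w) q
  rw [← hp] at hprox
  have e1 : p - (q + τ • w) = (p - q) - τ • w := by abel
  have e2 : q - (q + τ • w) = -(τ • w) := by abel
  have h1 : ‖p - (q + τ • w)‖^2 = ‖p - q‖^2 - 2*(τ*⟪p - q, w⟫) + τ^2*‖w‖^2 := by
    rw [e1, norm_sub_sq_real, real_inner_smul_right, norm_smul]
    simp [mul_pow, abs_of_pos hτ]
  have h2 : ‖q - (q + τ • w)‖^2 = τ^2*‖w‖^2 := by
    rw [e2, norm_neg, norm_smul]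
    simp [mul_pow, abs_of_pos hτ]
  have h3 : ⟪p - q, w⟫ = ⟪A (p - q), g - A q⟫ := by
    rw [hw, ContinuousLinearMap.adjoint_inner_right]
  have h4 : ⟪A (p - q), g - A q⟫
      = (‖A q - g‖^2 + ‖A (p - q)‖^2 - ‖A p - g‖^2) / 2 := by
    have e3 : A (p - q) = (A p - g) - (A q - g) := by rw [map_sub]; abel
    rw [e3, norm_sub_sq_real (A p - g) (A q - g)]
    have e4 : g - A q = -(A q - g) := by abel
    rw [e4, inner_neg_right, inner_sub_left, real_inner_self_eq_norm_sq, real_inner_comm]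
    ring
  rw [norm_sub_rev q p, h1, h2, h3, h4, ← hs] at hprox
  have hAd : ‖A (p - q)‖^2 ≤ ‖A‖^2 * ‖p - q‖^2 := by
    have := A.le_opNorm (p - q)
    nlinarith [norm_nonneg (A (p-q)), norm_nonneg (p-q), norm_nonneg A]
  have hu : 2*s*‖A p - g‖ ≤ ‖A p - g‖^2 + s^2 := by
    nlinarith [sq_nonneg (‖A p - g‖ - s)]
  linarith [mul_le_mul_of_nonneg_left hAd (le_of_lt hτ),
    mul_le_mul_of_nonneg_left hu (le_of_lt hτ), hprox]

theorem sqrt_ista_asymptotic_regularity {d m : ℕ} (τ μ : ℝ) (hμ : 0 < μ)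
    (A : EuclideanSpace ℝ (Fin d) →L[ℝ] EuclideanSpace ℝ (Fin m))
    (g : EuclideanSpace ℝ (Fin m)) (hτ : 0 < τ) (hτ2 : τ < 2 / ‖A‖ ^ 2)
    (f : ℕ → EuclideanSpace ℝ (Fin d)) (σ : ℕ → ℝ)
    (hσ : ∀ k, σ k = ‖A (f k) - g‖) (hσpos : ∀ k, 0 < σ k)
    (σmax : ℝ) (hσmax : ∀ k, σ k ≤ σmax)
    (hiter : ∀ k, f (k + 1) =
      softThVec (2 * τ * μ * σ k) (f k + τ • (ContinuousLinearMap.adjoint A) (g - A (f k)))) :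
    Summable (fun k => ‖f (k + 1) - f k‖ ^ 2) ∧
      Tendsto (fun k => ‖f (k + 1) - f k‖) atTop (𝓝 0) ∧
      Tendsto (fun k => |σ (k + 1) - σ k|) atTop (𝓝 0) := by
  -- ‖A‖ > 0 and the gap c := 2 - τ‖A‖² > 0
  have hApos : 0 < ‖A‖ := by
    rcases (norm_nonneg A).lt_or_eq with h | h
    · exact h
    · exfalso; rw [← h] at hτ2; simp at hτ2; linarith
  have hgap : 0 < 2 - τ * ‖A‖^2 := by
    have := (lt_div_iff₀ (by positivity : (0:ℝ) < ‖A‖^2)).mp hτ2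
    linarith
  have hσmaxpos : 0 < σmax := lt_of_lt_of_le (hσpos 0) (hσmax 0)
  set Φ : ℕ → ℝ := fun k => σ k + μ * l1 (f k) with hΦ
  set C : ℝ := (2 - τ * ‖A‖^2) / (2 * σmax * τ) with hC
  have hCpos : 0 < C := by positivity
  have hl1nonneg : ∀ x : EuclideanSpace ℝ (Fin d), 0 ≤ l1 x := by
    intro x; exact Finset.sum_nonneg fun i _ => abs_nonneg _
  have hΦnonneg : ∀ k, 0 ≤ Φ k := fun k =>
    add_nonneg (hσpos k).le (mul_nonneg hμ.le (hl1nonneg _))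
  -- key per-step inequality
  have key : ∀ k, Φ (k+1) + C * ‖f (k+1) - f k‖^2 ≤ Φ k := by
    intro k
    have hds := descent_step hμ A g (f k) hτ (hσ k) (hσpos k) (f (k+1)) (hiter k)
    have hσ1 : σ (k+1) = ‖A (f (k+1)) - g‖ := hσ (k+1)
    rw [← hσ1] at hds
    have hpos : (0:ℝ) < 2 * σ k * τ := by have := hσpos k; positivity
    have hfrac : C * ‖f (k+1) - f k‖^2 ≤
        ((2 - τ * ‖A‖^2) / (2 * σ k * τ)) * ‖f (k+1) - f k‖^2 := by
      apply mul_le_mul_of_nonneg_right _ (sq_nonneg _)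
      rw [hC]
      exact div_le_div_of_nonneg_left hgap.le hpos
        (by nlinarith [hσmax k, hσpos k])
    have goal2 : σ (k+1) + μ * l1 (f (k+1)) +
        ((2 - τ * ‖A‖^2) / (2 * σ k * τ)) * ‖f (k+1) - f k‖^2 ≤
        σ k + μ * l1 (f k) := by
      rw [div_mul_eq_mul_div, ← le_sub_iff_add_le', div_le_iff₀ hpos]
      nlinarith [hds]
    show σ (k+1) + μ * l1 (f (k+1)) + C * ‖f (k+1) - f k‖^2 ≤ σ k + μ * l1 (f k)
    linarith [hfrac, goal2]
  -- summability
  have hsum : Summable (fun k => ‖f (k + 1) - f k‖ ^ 2) := by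
    apply summable_of_sum_range_le (c := Φ 0 / C)
      (fun n => sq_nonneg _)
    intro n
    have hb : ∀ n, C * (∑ i ∈ Finset.range n, ‖f (i + 1) - f i‖ ^ 2) + Φ n ≤ Φ 0 := by
      intro n
      induction n with
      | zero => simp
      | succ n ih =>
        rw [Finset.sum_range_succ]
        have := key n
        nlinarith [this, ih]
    rw [le_div_iff₀ hCpos]
    have := hb n
    have := hΦnonneg n
    nlinarith
  refine ⟨hsum, ?_, ?_⟩
  · have h2 : Tendsto (fun k => ‖f (k + 1) - f k‖ ^ 2) atTop (𝓝 0) :=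
      hsum.tendsto_atTop_zero
    have h3 := h2.sqrt
    simp only [Real.sqrt_zero] at h3
    convert h3 using 2 with k
    rw [Real.sqrt_sq (norm_nonneg _)]
  · have h2 : Tendsto (fun k => ‖f (k + 1) - f k‖ ^ 2) atTop (𝓝 0) :=
      hsum.tendsto_atTop_zero
    have h3 := h2.sqrt
    simp only [Real.sqrt_zero] at h3
    have hnrm : Tendsto (fun k => ‖f (k + 1) - f k‖) atTop (𝓝 0) := by
      convert h3 using 2 with k
      rw [Real.sqrt_sq (norm_nonneg _)]
    have h4 : Tendsto (fun k => ‖A‖ * ‖f (k + 1) - f k‖) atTop (𝓝 0) := by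
      simpa using hnrm.const_mul ‖A‖
    apply squeeze_zero (fun k => abs_nonneg _) _ h4
    intro k
    rw [hσ (k+1), hσ k]
    calc |‖A (f (k+1)) - g‖ - ‖A (f k) - g‖| ≤ ‖(A (f (k+1)) - g) - (A (f k) - g)‖ :=
          abs_norm_sub_norm_le _ _
      _ = ‖A (f (k+1) - f k)‖ := by rw [map_sub]; congr 1; abel
      _ ≤ ‖A‖ * ‖f (k+1) - f k‖ := A.le_opNorm _
end

section
/- Let τ, μ > 0, A : ℝ^d → ℝ^m linear, g ∈ ℝ^m. Suppose f* ∈ ℝ^d satisfies f* = S_{2τμσ*}(f* + τA*(g - Af*)) with σ* = ‖Af* - g‖ > 0. Then f* is a global minimizer of Φ_μ(f) = ‖Af - g‖ + μ‖f‖₁. -/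
open scoped RealInnerProductSpace BigOperators
open Filter Topology

lemma softTh_subgrad (t x y : ℝ) (ht : 0 < t) (h : y = softTh t (y + x)) (z : ℝ) :
    x * (z - y) ≤ t/2 * |z| - t/2 * |y| := by
  unfold softTh at h
  split_ifs at h with h1 h2
  · have hx : x = -(t/2) := by linarith
    have hy : y ≤ 0 := by linarith
    have hay : |y| = -y := abs_of_nonpos hy
    have hz : 0 ≤ t/2 * (|z| + z) :=
      mul_nonneg (by linarith) (by linarith [neg_abs_le z])
    rw [hx, hay]
    nlinarith [hz]
  · have hy0 : y = 0 := h
    rw [hy0] at h2 ⊢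
    simp only [zero_add] at h2
    have h3 : x * z ≤ |x| * |z| := le_trans (le_abs_self _) (le_of_eq (abs_mul x z))
    have h4 : |x| * |z| ≤ t/2 * |z| := by
      apply mul_le_mul_of_nonneg_right (le_of_lt h2) (abs_nonneg z)
    simp only [abs_zero]
    nlinarith
  · have hx : x = t/2 := by linarith
    push_neg at h1 h2
    have hy : 0 ≤ y := by
      rcases abs_cases (y + x) with ⟨he, _⟩ | ⟨he, _⟩
      · nlinarith
      · nlinarith
    have hay : |y| = y := abs_of_nonneg hy
    have hz : 0 ≤ t/2 * (|z| - z) :=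
      mul_nonneg (by linarith) (by linarith [le_abs_self z])
    rw [hx, hay]
    nlinarith [hz]

theorem fixed_point_is_minimizer {d m : ℕ} (τ μ : ℝ) (hτ : 0 < τ) (hμ : 0 < μ)
    (A : EuclideanSpace ℝ (Fin d) →L[ℝ] EuclideanSpace ℝ (Fin m))
    (g : EuclideanSpace ℝ (Fin m)) (fstar : EuclideanSpace ℝ (Fin d))
    (hσpos : 0 < ‖A fstar - g‖)
    (hfix : fstar = softThVec (2 * τ * μ * ‖A fstar - g‖)
      (fstar + τ • (ContinuousLinearMap.adjoint A) (g - A fstar))) :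
    ∀ f, ‖A fstar - g‖ + μ * l1 fstar ≤ ‖A f - g‖ + μ * l1 f := by
  intro f
  set σ := ‖A fstar - g‖ with hσ
  set u : EuclideanSpace ℝ (Fin d) := (ContinuousLinearMap.adjoint A) (g - A fstar) with hu
  set t : ℝ := 2 * τ * μ * σ with htdef
  have ht : 0 < t := by positivity
  -- coordinatewise subgradient inequality
  have hcoord : ∀ i, u i * (f i - fstar i) ≤ μ * σ * |f i| - μ * σ * |fstar i| := by
    intro i
    have hi : fstar i = softTh t (fstar i + τ * u i) :=
      congrArg (fun v : EuclideanSpace ℝ (Fin d) => v i) hfix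
    have := softTh_subgrad t (τ * u i) (fstar i) ht hi (f i)
    have ht2 : t / 2 = τ * (μ * σ) := by rw [htdef]; ring
    rw [ht2] at this
    have hτ' := hτ.le
    nlinarith [this]
  -- sum it up
  have hsum : ⟪u, f - fstar⟫ ≤ μ * σ * l1 f - μ * σ * l1 fstar := by
    have : ⟪u, f - fstar⟫ = ∑ i, u i * (f i - fstar i) := by
      simp [PiLp.inner_apply, RCLike.inner_apply, PiLp.sub_apply]
      exact Finset.sum_congr rfl fun i _ => mul_comm _ _
    rw [this]
    unfold l1
    rw [Finset.mul_sum, Finset.mul_sum, ← Finset.sum_sub_distrib]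
    exact Finset.sum_le_sum fun i _ => hcoord i
  have hadj : ⟪u, f - fstar⟫ = ⟪g - A fstar, A f - A fstar⟫ := by
    rw [hu, ContinuousLinearMap.adjoint_inner_left, map_sub]
  have hexp : ⟪g - A fstar, A f - A fstar⟫
      = ⟪g - A fstar, A f - g⟫ + σ ^ 2 := by
    have : A f - A fstar = (A f - g) + (g - A fstar) := by abel
    rw [this, inner_add_right, real_inner_self_eq_norm_sq]
    have : ‖g - A fstar‖ = σ := by rw [hσ, ← norm_neg]; congr 1; abel
    rw [this]
  have hcs : -‖g - A fstar‖ * ‖A f - g‖ ≤ ⟪g - A fstar, A f - g⟫ := by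
    have := abs_real_inner_le_norm (g - A fstar) (A f - g)
    have h2 := neg_abs_le (⟪g - A fstar, A f - g⟫)
    nlinarith
  have hng : ‖g - A fstar‖ = σ := by rw [hσ, ← norm_neg]; congr 1; abel
  rw [hng] at hcs
  have hkey : σ ^ 2 - σ * ‖A f - g‖ ≤ μ * σ * l1 f - μ * σ * l1 fstar := by
    have := hsum
    rw [hadj, hexp] at this
    nlinarith
  nlinarith [hσpos]
end

section
/- Let A : ℝ^d → ℝ^m be linear, g ∈ ℝ^m, f* ∈ ℝ^d with ‖Af* - g‖ > 0, and μ > 0. Then f* is a global minimizer of the square-root Lasso cost ‖Af - g‖ + μ‖f‖₁ if and only if f* is a global minimizer of the Lasso cost ‖Af - g‖² + μ̃‖f‖₁ with μ̃ = 2μ‖Af* - g‖. -/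
open scoped RealInnerProductSpace BigOperators
open Filter Topology

theorem sqrt_lasso_iff_lasso_minimizer {d m : ℕ} (μ : ℝ) (hμ : 0 < μ)
    (A : EuclideanSpace ℝ (Fin d) →L[ℝ] EuclideanSpace ℝ (Fin m))
    (g : EuclideanSpace ℝ (Fin m)) (fstar : EuclideanSpace ℝ (Fin d))
    (hres : 0 < ‖A fstar - g‖) :
    (∀ f, ‖A fstar - g‖ + μ * l1 fstar ≤ ‖A f - g‖ + μ * l1 f) ↔
      (∀ f, ‖A fstar - g‖ ^ 2 + (2 * μ * ‖A fstar - g‖) * l1 fstar ≤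
        ‖A f - g‖ ^ 2 + (2 * μ * ‖A fstar - g‖) * l1 f) := by
  set r := ‖A fstar - g‖ with hr
  constructor
  · intro h f
    have h1 := h f
    nlinarith [sq_nonneg (‖A f - g‖ - r), hres]
  · intro h f
    set nf := ‖A f - g‖ with hnf
    set a := l1 fstar with ha
    set b := l1 f with hb
    -- key inequality for all t ∈ (0,1]
    have K : ∀ t : ℝ, 0 < t → t ≤ 1 →
        2 * μ * r * (a - b) ≤ 2 * r * (nf - r) + t * (nf - r) ^ 2 := by
      intro t ht0 ht1
      set ft : EuclideanSpace ℝ (Fin d) := fstar + t • (f - fstar) with hft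
      have hlasso := h ft
      -- norm convexity
      have hA : A ft - g = (1 - t) • (A fstar - g) + t • (A f - g) := by
        have : A ft = A fstar + t • (A f - A fstar) := by
          rw [hft, map_add, map_smul, map_sub]
        rw [this]; module
      have hnorm : ‖A ft - g‖ ≤ (1 - t) * r + t * nf := by
        rw [hA]
        calc ‖(1 - t) • (A fstar - g) + t • (A f - g)‖
            ≤ ‖(1 - t) • (A fstar - g)‖ + ‖t • (A f - g)‖ := norm_add_le _ _
          _ = (1 - t) * r + t * nf := by
              rw [norm_smul, norm_smul, Real.norm_eq_abs, Real.norm_eq_abs,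
                abs_of_nonneg (by linarith), abs_of_nonneg (by linarith)]
      have hbound_nonneg : 0 ≤ (1 - t) * r + t * nf := by
        have := norm_nonneg (A fstar - g)
        have := norm_nonneg (A f - g)
        nlinarith
      have hnormsq : ‖A ft - g‖ ^ 2 ≤ ((1 - t) * r + t * nf) ^ 2 :=
        pow_le_pow_left₀ (norm_nonneg _) hnorm 2
      -- l1 convexity
      have hl1 : l1 ft ≤ (1 - t) * a + t * b := by
        rw [ha, hb]
        simp only [l1]
        rw [Finset.mul_sum, Finset.mul_sum, ← Finset.sum_add_distrib]
        refine Finset.sum_le_sum fun i _ => ?_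
        have hfi : ft i = (1 - t) * fstar i + t * f i := by
          rw [hft]
          simp [PiLp.add_apply, PiLp.smul_apply, PiLp.sub_apply, smul_eq_mul]
          ring
        rw [hfi]
        calc |(1 - t) * fstar i + t * f i|
            ≤ |(1 - t) * fstar i| + |t * f i| := abs_add_le _ _
          _ = (1 - t) * |fstar i| + t * |f i| := by
              rw [abs_mul, abs_mul, abs_of_nonneg (by linarith : (0:ℝ) ≤ 1 - t),
                abs_of_nonneg ht0.le]
      have hl1' : (2 * μ * r) * l1 ft ≤ (2 * μ * r) * ((1 - t) * a + t * b) :=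
        mul_le_mul_of_nonneg_left hl1 (by positivity)
      have h0 : 0 ≤ t * (2 * r * (nf - r) + t * (nf - r) ^ 2 - 2 * μ * r * (a - b)) := by
        nlinarith [hlasso, hnormsq, hl1']
      nlinarith [h0, ht0]
    -- pass to the limit t → 0
    have key : 2 * μ * r * (a - b) ≤ 2 * r * (nf - r) := by
      refine le_of_forall_pos_le_add fun ε hε => ?_
      set t : ℝ := min 1 (ε / ((nf - r) ^ 2 + 1)) with htdef
      have ht0 : 0 < t := lt_min one_pos (div_pos hε (by positivity))
      have ht1 : t ≤ 1 := min_le_left _ _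
      have hKt := K t ht0 ht1
      have htle : t ≤ ε / ((nf - r) ^ 2 + 1) := min_le_right _ _
      have hsmall : t * (nf - r) ^ 2 ≤ ε := by
        have h1 : t * ((nf - r) ^ 2 + 1) ≤ ε := by
          rw [← div_mul_cancel₀ ε (show ((nf - r) ^ 2 + 1) ≠ 0 by positivity)]
          exact mul_le_mul_of_nonneg_right htle (by positivity)
        nlinarith
      linarith
    nlinarith [key, hres, hμ]
end

section
/- Let {f_k}, {σ_k} be the SQRT-ISTA iterates with σ_k > 0 for all k. Then there is a constant C ≥ 1, independent of k, such that σ_{k+1} ≤ C·σ_k for all k; specifically σ_{k+1} ≤ (1 + τ‖A‖² + √d·τμ‖A‖)·σ_k. -/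
open scoped RealInnerProductSpace BigOperators
open Filter Topology

lemma softTh_sub_abs_le (t x : ℝ) (ht : 0 ≤ t) : |softTh t x - x| ≤ t / 2 := by
  unfold softTh
  split_ifs with h1 h2
  · have h : x + t / 2 - x = t / 2 := by ring
    rw [h, abs_of_nonneg (by linarith)]
  · rw [zero_sub, abs_neg]
    exact le_of_lt h2
  · have h : x - t / 2 - x = -(t / 2) := by ring
    rw [h, abs_neg, abs_of_nonneg (by linarith)]

lemma softThVec_sub_norm_le {d : ℕ} (t : ℝ) (ht : 0 ≤ t) (x : EuclideanSpace ℝ (Fin d)) :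
    ‖softThVec t x - x‖ ≤ Real.sqrt d * (t / 2) := by
  rw [EuclideanSpace.norm_eq]
  have hsum : ∑ i, ‖(softThVec t x - x) i‖ ^ 2 ≤ (d : ℝ) * (t / 2) ^ 2 := by
    calc ∑ i, ‖(softThVec t x - x) i‖ ^ 2 ≤ ∑ _i : Fin d, (t / 2) ^ 2 := by
          apply Finset.sum_le_sum
          intro i _
          have : ‖(softThVec t x - x) i‖ = |softTh t (x i) - x i| := by
            simp [softThVec, Real.norm_eq_abs]
          rw [this]
          exact pow_le_pow_left₀ (abs_nonneg _) (softTh_sub_abs_le t (x i) ht) 2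
      _ = (d : ℝ) * (t / 2) ^ 2 := by simp [mul_comm]
  calc Real.sqrt (∑ i, ‖(softThVec t x - x) i‖ ^ 2)
      ≤ Real.sqrt ((d : ℝ) * (t / 2) ^ 2) := Real.sqrt_le_sqrt hsum
    _ = Real.sqrt d * (t / 2) := by
        rw [Real.sqrt_mul (Nat.cast_nonneg d), Real.sqrt_sq (by linarith)]

theorem sqrt_ista_residual_ratio_bounded {d m : ℕ} (τ μ : ℝ) (hτ : 0 < τ) (hμ : 0 < μ)
    (A : EuclideanSpace ℝ (Fin d) →L[ℝ] EuclideanSpace ℝ (Fin m))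
    (g : EuclideanSpace ℝ (Fin m))
    (f : ℕ → EuclideanSpace ℝ (Fin d)) (σ : ℕ → ℝ)
    (hσ : ∀ k, σ k = ‖A (f k) - g‖) (hσpos : ∀ k, 0 < σ k)
    (hiter : ∀ k, f (k + 1) =
      softThVec (2 * τ * μ * σ k) (f k + τ • (ContinuousLinearMap.adjoint A) (g - A (f k)))) :
    (∃ C : ℝ, 1 ≤ C ∧ ∀ k, σ (k + 1) ≤ C * σ k) ∧
      ∀ k, σ (k + 1) ≤ (1 + τ * ‖A‖ ^ 2 + Real.sqrt d * τ * μ * ‖A‖) * σ k := by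
  have key : ∀ k, σ (k + 1) ≤ (1 + τ * ‖A‖ ^ 2 + Real.sqrt d * τ * μ * ‖A‖) * σ k := by
    intro k
    set x := f k + τ • (ContinuousLinearMap.adjoint A) (g - A (f k)) with hx
    have hσk := (hσpos k).le
    have ht : (0:ℝ) ≤ 2 * τ * μ * σ k := by positivity
    have hdiff : ‖f (k + 1) - f k‖ ≤ Real.sqrt d * τ * μ * σ k + τ * ‖A‖ * σ k := by
      have h1 : ‖f (k+1) - x‖ ≤ Real.sqrt d * (2 * τ * μ * σ k / 2) := by
        rw [hiter k]; exact softThVec_sub_norm_le _ ht x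
      have h2 : ‖x - f k‖ ≤ τ * ‖A‖ * σ k := by
        rw [hx]
        simp only [add_sub_cancel_left]
        rw [norm_smul, Real.norm_eq_abs, abs_of_pos hτ]
        have hadj : ‖(ContinuousLinearMap.adjoint A) (g - A (f k))‖ ≤ ‖A‖ * σ k := by
          calc ‖(ContinuousLinearMap.adjoint A) (g - A (f k))‖
              ≤ ‖ContinuousLinearMap.adjoint A‖ * ‖g - A (f k)‖ :=
                ContinuousLinearMap.le_opNorm _ _
            _ = ‖A‖ * σ k := by
                rw [LinearIsometryEquiv.norm_map ContinuousLinearMap.adjoint A, hσ k,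
                  norm_sub_rev]
        calc τ * ‖(ContinuousLinearMap.adjoint A) (g - A (f k))‖
            ≤ τ * (‖A‖ * σ k) := by
              exact mul_le_mul_of_nonneg_left hadj hτ.le
          _ = τ * ‖A‖ * σ k := by ring
      calc ‖f (k+1) - f k‖ = ‖(f (k+1) - x) + (x - f k)‖ := by
            rw [sub_add_sub_cancel]
        _ ≤ ‖f (k+1) - x‖ + ‖x - f k‖ := norm_add_le _ _
        _ ≤ Real.sqrt d * (2 * τ * μ * σ k / 2) + τ * ‖A‖ * σ k := add_le_add h1 h2
        _ = Real.sqrt d * τ * μ * σ k + τ * ‖A‖ * σ k := by ring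
    have : σ (k+1) ≤ σ k + ‖A‖ * ‖f (k+1) - f k‖ := by
      rw [hσ (k+1), hσ k]
      calc ‖A (f (k+1)) - g‖ = ‖(A (f k) - g) + A (f (k+1) - f k)‖ := by
            congr 1; rw [map_sub]; abel
        _ ≤ ‖A (f k) - g‖ + ‖A (f (k+1) - f k)‖ := norm_add_le _ _
        _ ≤ ‖A (f k) - g‖ + ‖A‖ * ‖f (k+1) - f k‖ := by
            exact add_le_add_right (ContinuousLinearMap.le_opNorm _ _) _
    calc σ (k+1) ≤ σ k + ‖A‖ * ‖f (k+1) - f k‖ := this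
      _ ≤ σ k + ‖A‖ * (Real.sqrt d * τ * μ * σ k + τ * ‖A‖ * σ k) := by
          exact add_le_add_right (mul_le_mul_of_nonneg_left hdiff (norm_nonneg _)) _
      _ = (1 + τ * ‖A‖ ^ 2 + Real.sqrt d * τ * μ * ‖A‖) * σ k := by ring
  refine ⟨⟨1 + τ * ‖A‖ ^ 2 + Real.sqrt d * τ * μ * ‖A‖, ?_, key⟩, key⟩
  have h1 : 0 ≤ τ * ‖A‖ ^ 2 := by positivity
  have h2 : 0 ≤ Real.sqrt d * τ * μ * ‖A‖ := by positivity
  linarith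
end
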